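/- Let $k < n$ be integers, $B_k = B(0,2^{-k}) \subset \mathbb{R}^d$, and for $h \in L_1(\mathbb{R}^d)$ define $M_{k,n}h(x) = \frac{1}{|B_k|}\int_{\mathcal{I}(B_k+x,n)} h(y)\,dy$, where $\mathcal{I}(B_k+x,n)$ is the union of the sets $Q \cap (B_k+x)$ over dyadic cubes $Q$ of side length $2^{-n}$ meeting $\partial(B_k+x)$. Then for all $1 \le p \le \infty$ and $h \in L_p(\mathbb{R}^d)$, $\|M_{k,n} h\|_p \le C_d \, 2^{k-n} \|h\|_p$ with $C_d$ depending only on $d$. -/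

import Mathlib

open MeasureTheory Metric
open scoped ENNReal

noncomputable section

/-- Euclidean space `ℝ^d`. -/
abbrev Euc (d : ℕ) := EuclideanSpace ℝ (Fin d)

/-- The standard dyadic cube at scale `n` (side length `2^{-n}`) indexed by `m`. -/
def dyadicCube (d : ℕ) (n : ℤ) (m : Fin d → ℤ) : Set (Euc d) :=
  {y | ∀ j, (m j : ℝ) * 2 ^ (-n) ≤ y j ∧ y j < ((m j : ℝ) + 1) * 2 ^ (-n)}

/-- Index of the dyadic cube at scale `n` containing `x`. -/
def dyadicIdx (d : ℕ) (n : ℤ) (x : Euc d) : Fin d → ℤ :=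
  fun j => ⌊(2 : ℝ) ^ n * x j⌋

/-- Dyadic conditional expectation at scale `2^{-n}`. -/
def Ek (d : ℕ) (n : ℤ) (h : Euc d → ℝ) (x : Euc d) : ℝ :=
  (2 : ℝ) ^ (n * d) * ∫ y in dyadicCube d n (dyadicIdx d n x), h y

/-- Average over the Euclidean ball of radius `2^{-k}` centered at `x`. -/
def Mk (d : ℕ) (k : ℤ) (h : Euc d → ℝ) (x : Euc d) : ℝ :=
  ((volume (ball (0 : Euc d) ((2 : ℝ) ^ (-k)))).toReal)⁻¹ *
    ∫ y in ball x ((2 : ℝ) ^ (-k)), h y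

/-- Indices of dyadic cubes at scale `n` meeting the boundary of the ball `B(x, 2^{-k})`. -/
def bdryIdx (d : ℕ) (k n : ℤ) (x : Euc d) : Set (Fin d → ℤ) :=
  {m | (dyadicCube d n m ∩ frontier (ball x ((2 : ℝ) ^ (-k)))).Nonempty}

/-- `𝓘(B_k + x, n)`: union over boundary cubes `Q` at scale `n` of `Q ∩ B(x,2^{-k})`. -/
def Ikn (d : ℕ) (k n : ℤ) (x : Euc d) : Set (Euc d) :=
  ⋃ m ∈ bdryIdx d k n x, dyadicCube d n m ∩ ball x ((2 : ℝ) ^ (-k))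

/-- The operator `M_{k,n}`. -/
def Mkn (d : ℕ) (k n : ℤ) (h : Euc d → ℝ) (x : Euc d) : ℝ :=
  ((volume (ball (0 : Euc d) ((2 : ℝ) ^ (-k)))).toReal)⁻¹ * ∫ y in Ikn d k n x, h y

/-- The concentric dilation `iQ` of the dyadic cube at scale `n` indexed by `m`. -/
def cubeDil (d : ℕ) (i : ℕ) (n : ℤ) (m : Fin d → ℤ) : Set (Euc d) :=
  {y | ∀ j, ((m j : ℝ) + 1 / 2) * 2 ^ (-n) - (i : ℝ) * 2 ^ (-n) / 2 ≤ y j ∧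
      y j < ((m j : ℝ) + 1 / 2) * 2 ^ (-n) + (i : ℝ) * 2 ^ (-n) / 2}

/-! ### Auxiliary lemmas -/

section Aux

open Set

lemma pow_sub_pow_le_aux (d : ℕ) {s r : ℝ} (hs : 0 ≤ s) (hsr : s ≤ r) :
    r ^ d - s ^ d ≤ d * (r - s) * r ^ (d - 1) := by
  induction d with
  | zero => simp
  | succ d ih =>
    have hr : 0 ≤ r := hs.trans hsr
    have h1 : r ^ (d + 1) - s ^ (d + 1) = r * (r ^ d - s ^ d) + (r - s) * s ^ d := by ring
    have h2 : r * (r ^ d - s ^ d) ≤ d * (r - s) * r ^ d := by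
      calc r * (r ^ d - s ^ d) ≤ r * (d * (r - s) * r ^ (d - 1)) := by
            apply mul_le_mul_of_nonneg_left ih hr
        _ ≤ d * (r - s) * r ^ d := by
            rcases Nat.eq_zero_or_pos d with h | h
            · simp [h]
            · have : r * (↑d * (r - s) * r ^ (d - 1)) = ↑d * (r - s) * (r ^ (d-1) * r) := by ring
              rw [this, pow_sub_one_mul h.ne' r]
    have h3 : (r - s) * s ^ d ≤ (r - s) * r ^ d :=
      mul_le_mul_of_nonneg_left (pow_le_pow_left₀ hs hsr d) (by linarith)
    calc r ^ (d+1) - s ^ (d+1) = r * (r ^ d - s ^ d) + (r - s) * s ^ d := h1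
      _ ≤ ↑d * (r - s) * r ^ d + (r - s) * r ^ d := add_le_add h2 h3
      _ = (↑(d+1)) * (r - s) * r ^ ((d+1) - 1) := by push_cast; ring

lemma measurableSet_dyadicCube (d : ℕ) (n : ℤ) (m : Fin d → ℤ) :
    MeasurableSet (dyadicCube d n m) := by
  have : dyadicCube d n m =
      ⋂ j, (fun y : Euc d => y j) ⁻¹' Ico ((m j : ℝ) * 2 ^ (-n)) (((m j : ℝ) + 1) * 2 ^ (-n)) := by
    ext y; simp [dyadicCube, mem_Ico]
  rw [this]
  exact MeasurableSet.iInter fun j => (by fun_prop : Measurable fun y : Euc d => y j) measurableSet_Ico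

lemma dist_le_of_mem_dyadicCube {d : ℕ} {n : ℤ} {m : Fin d → ℤ} {y z : Euc d}
    (hy : y ∈ dyadicCube d n m) (hz : z ∈ dyadicCube d n m) :
    dist y z ≤ Real.sqrt d * 2 ^ (-n) := by
  have hpow : (0:ℝ) < 2 ^ (-n) := by positivity
  have hcoord : ∀ j, dist (y j) (z j) ≤ 2 ^ (-n) := by
    intro j
    obtain ⟨h1, h2⟩ := hy j
    obtain ⟨h3, h4⟩ := hz j
    rw [Real.dist_eq, abs_sub_le_iff]
    constructor <;> nlinarith
  calc dist y z = Real.sqrt (∑ j, dist (y j) (z j) ^ 2) := EuclideanSpace.dist_eq y z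
    _ ≤ Real.sqrt (∑ _j : Fin d, ((2:ℝ) ^ (-n)) ^ 2) := by
        apply Real.sqrt_le_sqrt
        apply Finset.sum_le_sum
        intro j _
        exact pow_le_pow_left₀ dist_nonneg (hcoord j) 2
    _ = Real.sqrt (d * ((2:ℝ) ^ (-n)) ^ 2) := by rw [Finset.sum_const]; simp [mul_comm]
    _ = Real.sqrt d * 2 ^ (-n) := by
        rw [Real.sqrt_mul (by positivity), Real.sqrt_sq hpow.le]

lemma annulus_vol (d : ℕ) (hd : 0 < d) (c : Euc d) {r δ : ℝ} (hr : 0 < r) (hδ : 0 < δ) :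
    volume {z : Euc d | r - δ ≤ dist z c ∧ dist z c < r} ≤
      ENNReal.ofReal (d * (δ / r)) * volume (ball c r) := by
  haveI : Nontrivial (Euc d) :=
    Module.nontrivial_of_finrank_pos (R := ℝ) (by simp [finrank_euclideanSpace_fin, hd])
  set s : ℝ := max (r - δ) 0 with hs
  have hs0 : 0 ≤ s := le_max_right _ _
  have hsr : s ≤ r := max_le (by linarith) hr.le
  have hsub : {z : Euc d | r - δ ≤ dist z c ∧ dist z c < r} ⊆ ball c r \ ball c s := by
    intro z ⟨h1, h2⟩
    refine ⟨mem_ball.2 h2, fun hz => ?_⟩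
    rw [mem_ball] at hz
    exact absurd hz (not_lt.2 (max_le h1 dist_nonneg))
  set V := volume (ball (0 : Euc d) 1) with hV
  have hVfin : V ≠ ⊤ := measure_ball_lt_top.ne
  have hballr : volume (ball c r) = ENNReal.ofReal (r ^ d) * V := by
    rw [Measure.addHaar_ball volume c hr.le, finrank_euclideanSpace_fin]
  have hballs : volume (ball c s) = ENNReal.ofReal (s ^ d) * V := by
    rw [Measure.addHaar_ball volume c hs0, finrank_euclideanSpace_fin]
  have hdiff : volume (ball c r \ ball c s) = volume (ball c r) - volume (ball c s) :=
    measure_diff (ball_subset_ball hsr) measurableSet_ball.nullMeasurableSet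
      measure_ball_lt_top.ne
  have hreal : r ^ d - s ^ d ≤ d * (δ / r) * r ^ d := by
    have h1 : r ^ d - s ^ d ≤ d * (r - s) * r ^ (d - 1) := pow_sub_pow_le_aux d hs0 hsr
    have h2 : r - s ≤ δ := by
      have := le_max_left (r - δ) 0
      linarith [this.trans_eq hs.symm]
    have h3 : (d : ℝ) * (r - s) * r ^ (d - 1) ≤ d * δ * r ^ (d - 1) :=
      mul_le_mul_of_nonneg_right
        (mul_le_mul_of_nonneg_left h2 (Nat.cast_nonneg d)) (by positivity)
    have h4 : (d : ℝ) * δ * r ^ (d - 1) = d * (δ / r) * r ^ d := by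
      rw [← pow_sub_one_mul hd.ne' r]
      have hr' : r ≠ 0 := hr.ne'
      field_simp
    linarith
  calc volume {z : Euc d | r - δ ≤ dist z c ∧ dist z c < r}
      ≤ volume (ball c r \ ball c s) := measure_mono hsub
    _ = ENNReal.ofReal (r ^ d) * V - ENNReal.ofReal (s ^ d) * V := by
        rw [hdiff, hballr, hballs]
    _ = ENNReal.ofReal (r ^ d - s ^ d) * V := by
        rw [ENNReal.ofReal_sub _ (by positivity), ENNReal.sub_mul (fun _ _ => hVfin)]
    _ ≤ ENNReal.ofReal (d * (δ / r) * r ^ d) * V := by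
        exact mul_le_mul_left (ENNReal.ofReal_le_ofReal hreal) V
    _ = ENNReal.ofReal (d * (δ / r)) * (ENNReal.ofReal (r ^ d) * V) := by
        rw [ENNReal.ofReal_mul (by positivity), mul_assoc]
    _ = ENNReal.ofReal (d * (δ / r)) * volume (ball c r) := by rw [hballr]

lemma lintegral_pow_le_aux {α : Type*} [MeasurableSpace α] (ν : Measure α)
    {g : α → ℝ≥0∞} (hg : AEMeasurable g ν) {pr : ℝ} (hpr : 1 ≤ pr) :
    (∫⁻ a, g a ∂ν) ^ pr ≤ (ν Set.univ) ^ (pr - 1) * ∫⁻ a, g a ^ pr ∂ν := by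
  rcases eq_or_lt_of_le hpr with h1 | h1
  · simp [← h1]
  · set q : ℝ := pr / (pr - 1) with hq
    have hpr0 : pr ≠ 0 := by linarith
    have hpq : pr.HolderConjugate q := Real.HolderConjugate.conjExponent h1
    have key := ENNReal.lintegral_mul_le_Lp_mul_Lq ν hpq hg aemeasurable_const
      (g := fun _ => (1 : ℝ≥0∞))
    simp only [Pi.mul_apply, mul_one, ENNReal.one_rpow, lintegral_one] at key
    calc (∫⁻ a, g a ∂ν) ^ pr
        ≤ ((∫⁻ a, g a ^ pr ∂ν) ^ (1 / pr) * (ν Set.univ) ^ (1 / q)) ^ pr :=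
          ENNReal.rpow_le_rpow key (by linarith)
      _ = (∫⁻ a, g a ^ pr ∂ν) ^ ((1 / pr) * pr) * (ν Set.univ) ^ ((1 / q) * pr) := by
          rw [ENNReal.mul_rpow_of_nonneg _ _ (by linarith : (0:ℝ) ≤ pr),
            ← ENNReal.rpow_mul, ← ENNReal.rpow_mul]
      _ = (ν Set.univ) ^ (pr - 1) * ∫⁻ a, g a ^ pr ∂ν := by
          rw [one_div_mul_cancel hpr0, ENNReal.rpow_one]
          have : (1 / q) * pr = pr - 1 := by
            rw [hq]
            field_simp
          rw [this, mul_comm]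

lemma measurableSet_Ikn (d : ℕ) (k n : ℤ) (x : Euc d) : MeasurableSet (Ikn d k n x) :=
  MeasurableSet.biUnion (Set.to_countable _)
    (fun m _ => (measurableSet_dyadicCube d n m).inter measurableSet_ball)

lemma mem_Ikn_dist {d : ℕ} {k n : ℤ} {x y : Euc d} (hy : y ∈ Ikn d k n x) :
    (2:ℝ) ^ (-k) - Real.sqrt d * 2 ^ (-n) ≤ dist y x ∧ dist y x < 2 ^ (-k) := by
  simp only [Ikn, Set.mem_iUnion, Set.mem_inter_iff, exists_prop] at hy
  obtain ⟨m, hm, hyQ, hyB⟩ := hy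
  obtain ⟨z, hzQ, hzF⟩ := hm
  have hz : dist z x = 2 ^ (-k) := mem_sphere.1 (frontier_ball_subset_sphere hzF)
  have hyz : dist z y ≤ Real.sqrt d * 2 ^ (-n) := dist_le_of_mem_dyadicCube hzQ hyQ
  refine ⟨?_, mem_ball.1 hyB⟩
  have := dist_triangle z y x
  rw [hz] at this
  linarith

end Aux

section Main

open Set

lemma enorm_Mkn_le (d : ℕ) (k n : ℤ) (h : Euc d → ℝ) (x : Euc d)
    (hv0 : volume (ball (0 : Euc d) ((2:ℝ) ^ (-k))) ≠ 0)
    (hvt : volume (ball (0 : Euc d) ((2:ℝ) ^ (-k))) ≠ ⊤) :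
    (‖Mkn d k n h x‖₊ : ℝ≥0∞) ≤
      (volume (ball (0 : Euc d) ((2:ℝ) ^ (-k))))⁻¹ * ∫⁻ y in Ikn d k n x, (‖h y‖₊ : ℝ≥0∞) := by
  set v := volume (ball (0 : Euc d) ((2:ℝ) ^ (-k))) with hv
  have hcv : ENNReal.ofReal (v.toReal)⁻¹ = v⁻¹ := by
    rw [ENNReal.ofReal_inv_of_pos (ENNReal.toReal_pos hv0 hvt), ENNReal.ofReal_toReal hvt]
  calc (‖Mkn d k n h x‖₊ : ℝ≥0∞)
      = ENNReal.ofReal (v.toReal)⁻¹ * (‖∫ y in Ikn d k n x, h y‖₊ : ℝ≥0∞) := by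
        rw [Mkn, nnnorm_mul, ENNReal.coe_mul, ← enorm_eq_nnnorm, Real.enorm_eq_ofReal (by positivity)]
    _ ≤ v⁻¹ * ∫⁻ y in Ikn d k n x, (‖h y‖₊ : ℝ≥0∞) := by
        rw [hcv]
        exact mul_le_mul_right (enorm_integral_le_lintegral_enorm _) _

/-- `‖M_{k,n} h‖_p ≤ C_d 2^{k-n} ‖h‖_p` for all `1 ≤ p ≤ ∞` and `k < n`. -/
theorem Mkn_Lp_bound (d : ℕ) (hd : 0 < d) :
    ∃ C : ℝ, 0 < C ∧ ∀ (k n : ℤ), k < n → ∀ (p : ℝ≥0∞), 1 ≤ p →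
      ∀ h : Euc d → ℝ, MemLp h p volume →
        eLpNorm (Mkn d k n h) p volume ≤
          ENNReal.ofReal (C * 2 ^ (k - n)) * eLpNorm h p volume := by
  have hsd : (0:ℝ) < Real.sqrt d := Real.sqrt_pos.2 (by exact_mod_cast hd)
  refine ⟨d * Real.sqrt d, by positivity, ?_⟩
  intro k n _hkn p hp h hmem
  set C : ℝ := d * Real.sqrt d with hC
  set r : ℝ := 2 ^ (-k) with hr_def
  set δ : ℝ := Real.sqrt d * 2 ^ (-n) with hδ_def
  have hr : 0 < r := by rw [hr_def]; positivity
  have hδ : 0 < δ := by rw [hδ_def]; positivity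
  have hE : (0:ℝ) < C * 2 ^ (k - n) := by rw [hC]; positivity
  have hfrac : (d : ℝ) * (δ / r) = C * 2 ^ (k - n) := by
    rw [hδ_def, hr_def, hC]
    rw [mul_div_assoc, ← zpow_sub₀ (two_ne_zero)]
    ring_nf
  set v := volume (ball (0 : Euc d) r) with hv
  have hv0 : v ≠ 0 := (measure_ball_pos _ _ hr).ne'
  have hvt : v ≠ ⊤ := measure_ball_lt_top.ne
  set E : ℝ≥0∞ := ENNReal.ofReal (C * 2 ^ (k - n)) with hEdef
  have hE0 : E ≠ 0 := by
    rw [hEdef]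
    simpa [ENNReal.ofReal_eq_zero, not_le] using hE
  have hEt : E ≠ ⊤ := ENNReal.ofReal_ne_top
  set Aof : ℝ≥0∞ := E * v with hA
  have hA0 : Aof ≠ 0 := mul_ne_zero hE0 hv0
  have hAt : Aof ≠ ⊤ := ENNReal.mul_ne_top hEt hvt
  -- volume bounds for Ikn and its dual sections
  have hIkn_vol : ∀ x : Euc d, volume (Ikn d k n x) ≤ Aof := by
    intro x
    calc volume (Ikn d k n x)
        ≤ volume {z : Euc d | r - δ ≤ dist z x ∧ dist z x < r} :=
          measure_mono (fun y hy => mem_Ikn_dist hy)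
      _ ≤ ENNReal.ofReal (d * (δ / r)) * volume (ball x r) := annulus_vol d hd x hr hδ
      _ = Aof := by rw [hfrac, Measure.addHaar_ball_center, hA, ← hv, hEdef]
  have hdual_vol : ∀ y : Euc d, volume {x : Euc d | r - δ ≤ dist x y ∧ dist x y < r} ≤ Aof := by
    intro y
    calc volume {x : Euc d | r - δ ≤ dist x y ∧ dist x y < r}
        ≤ ENNReal.ofReal (d * (δ / r)) * volume (ball y r) := annulus_vol d hd y hr hδ
      _ = Aof := by rw [hfrac, Measure.addHaar_ball_center, hA, ← hv, hEdef]
  -- pointwise bound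
  have hpt0 : ∀ x, (‖Mkn d k n h x‖₊ : ℝ≥0∞) ≤ v⁻¹ * ∫⁻ y in Ikn d k n x, (‖h y‖₊ : ℝ≥0∞) :=
    fun x => enorm_Mkn_le d k n h x hv0 hvt
  rcases eq_or_ne p ⊤ with hptop | hptop
  · -- p = ∞
    subst hptop
    rw [eLpNorm_exponent_top, eLpNorm_exponent_top]
    have hbd : ∀ x, (‖Mkn d k n h x‖₊ : ℝ≥0∞) ≤ E * eLpNormEssSup h volume := by
      intro x
      have h1 : ∫⁻ y in Ikn d k n x, (‖h y‖₊ : ℝ≥0∞) ≤ eLpNormEssSup h volume *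
          volume (Ikn d k n x) := by
        calc ∫⁻ y in Ikn d k n x, (‖h y‖₊ : ℝ≥0∞)
            ≤ ∫⁻ _ in Ikn d k n x, eLpNormEssSup h volume :=
              lintegral_mono_ae (ae_restrict_of_ae (ENNReal.ae_le_essSup _))
          _ = eLpNormEssSup h volume * volume (Ikn d k n x) := setLIntegral_const _ _
      calc (‖Mkn d k n h x‖₊ : ℝ≥0∞)
          ≤ v⁻¹ * (eLpNormEssSup h volume * volume (Ikn d k n x)) :=
            (hpt0 x).trans (mul_le_mul_right h1 _)
        _ ≤ v⁻¹ * (eLpNormEssSup h volume * Aof) :=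
            mul_le_mul_right (mul_le_mul_right (hIkn_vol x) _) _
        _ = E * eLpNormEssSup h volume * (v⁻¹ * v) := by rw [hA]; ring
        _ = E * eLpNormEssSup h volume := by
            rw [ENNReal.inv_mul_cancel hv0 hvt, mul_one]
    exact essSup_le_of_ae_le _ (Filter.Eventually.of_forall hbd)
  · -- p finite
    have hp0 : p ≠ 0 := (lt_of_lt_of_le zero_lt_one hp).ne'
    set pr : ℝ := p.toReal with hpr_def
    have hpr1 : (1:ℝ) ≤ pr := by
      rw [hpr_def, ← ENNReal.toReal_one]
      exact ENNReal.toReal_mono hptop hp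
    have hpr0 : (0:ℝ) < pr := lt_of_lt_of_le zero_lt_one hpr1
    obtain ⟨g, gmeas, hg⟩ := hmem.aestronglyMeasurable.enorm
    set G : Euc d → ℝ≥0∞ := fun y => g y ^ pr with hG
    have Gmeas : Measurable G := gmeas.pow_const pr
    have hgr : ∀ x, ∫⁻ y in Ikn d k n x, (‖h y‖₊ : ℝ≥0∞) = ∫⁻ y in Ikn d k n x, g y :=
      fun x => lintegral_congr_ae (ae_restrict_of_ae hg)
    have hpt : ∀ x, (‖Mkn d k n h x‖₊ : ℝ≥0∞) ≤ v⁻¹ * ∫⁻ y in Ikn d k n x, g y := by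
      intro x; rw [← hgr]; exact hpt0 x
    -- Step A: pointwise Hölder
    have stepA : ∀ x, (‖Mkn d k n h x‖₊ : ℝ≥0∞) ^ pr ≤
        (v⁻¹ ^ pr * Aof ^ (pr - 1)) * ∫⁻ y in Ikn d k n x, G y := by
      intro x
      calc (‖Mkn d k n h x‖₊ : ℝ≥0∞) ^ pr
          ≤ (v⁻¹ * ∫⁻ y in Ikn d k n x, g y) ^ pr :=
            ENNReal.rpow_le_rpow (hpt x) (by linarith)
        _ = v⁻¹ ^ pr * (∫⁻ y in Ikn d k n x, g y) ^ pr :=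
            ENNReal.mul_rpow_of_nonneg _ _ (by linarith)
        _ ≤ v⁻¹ ^ pr * (Aof ^ (pr - 1) * ∫⁻ y in Ikn d k n x, G y) := by
            apply mul_le_mul_right
            calc (∫⁻ y in Ikn d k n x, g y) ^ pr
                ≤ ((volume.restrict (Ikn d k n x)) Set.univ) ^ (pr - 1) *
                    ∫⁻ y in Ikn d k n x, G y :=
                  lintegral_pow_le_aux _ gmeas.aemeasurable hpr1
              _ ≤ Aof ^ (pr - 1) * ∫⁻ y in Ikn d k n x, G y := by
                  apply mul_le_mul_left
                  apply ENNReal.rpow_le_rpow _ (by linarith)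
                  rw [Measure.restrict_apply_univ]
                  exact hIkn_vol x
        _ = (v⁻¹ ^ pr * Aof ^ (pr - 1)) * ∫⁻ y in Ikn d k n x, G y := by rw [mul_assoc]
    -- Step B: duality / Tonelli
    have stepB : ∫⁻ x, ∫⁻ y in Ikn d k n x, G y ≤ Aof * ∫⁻ y, G y := by
      set S : Set (Euc d × Euc d) := {q | r - δ ≤ dist q.1 q.2 ∧ dist q.1 q.2 < r} with hS
      have hSmeas : MeasurableSet S := by
        have : S = (fun q : Euc d × Euc d => dist q.1 q.2) ⁻¹' Ico (r - δ) r := by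
          ext q; simp [hS, mem_Ico]
        rw [this]
        exact measurable_dist measurableSet_Ico
      have hφ : Measurable fun q : Euc d × Euc d => S.indicator (fun q => G q.2) q :=
        (Gmeas.comp measurable_snd).indicator hSmeas
      have h1 : ∀ x, ∫⁻ y in Ikn d k n x, G y ≤
          ∫⁻ y, S.indicator (fun q => G q.2) (x, y) := by
        intro x
        rw [← lintegral_indicator (measurableSet_Ikn d k n x)]
        apply lintegral_mono
        intro y
        show (Ikn d k n x).indicator G y ≤ S.indicator (fun q => G q.2) (x, y)
        by_cases hy : y ∈ Ikn d k n x
        · have hd2 := mem_Ikn_dist hy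
          have hxyS : (x, y) ∈ S := by
            refine ⟨?_, ?_⟩ <;> rw [dist_comm x y]
            · exact hd2.1
            · exact hd2.2
          rw [Set.indicator_of_mem hy, Set.indicator_of_mem hxyS]
        · rw [Set.indicator_of_notMem hy]
          exact zero_le
      calc ∫⁻ x, ∫⁻ y in Ikn d k n x, G y
          ≤ ∫⁻ x, ∫⁻ y, S.indicator (fun q => G q.2) (x, y) := lintegral_mono h1
        _ = ∫⁻ y, ∫⁻ x, S.indicator (fun q => G q.2) (x, y) :=
            lintegral_lintegral_swap hφ.aemeasurable
        _ ≤ ∫⁻ y, G y * Aof := by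
            apply lintegral_mono
            intro y
            have hSy : MeasurableSet {x : Euc d | r - δ ≤ dist x y ∧ dist x y < r} := by
              have : {x : Euc d | r - δ ≤ dist x y ∧ dist x y < r} =
                  (fun x : Euc d => dist x y) ⁻¹' Ico (r - δ) r := by
                ext q; simp [mem_Ico]
              rw [this]
              exact (measurable_dist.comp (measurable_id.prodMk measurable_const))
                measurableSet_Ico
            have hcongr : ∀ x, S.indicator (fun q => G q.2) (x, y) =
                ({x : Euc d | r - δ ≤ dist x y ∧ dist x y < r}).indicator (fun _ => G y) x := by
              intro x
              by_cases hx : (x, y) ∈ S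
              · rw [Set.indicator_of_mem hx,
                  Set.indicator_of_mem (show x ∈ {x : Euc d | r - δ ≤ dist x y ∧ dist x y < r} from hx)]
              · rw [Set.indicator_of_notMem hx,
                  Set.indicator_of_notMem (show x ∉ {x : Euc d | r - δ ≤ dist x y ∧ dist x y < r} from hx)]
            calc ∫⁻ x, S.indicator (fun q => G q.2) (x, y)
                = ∫⁻ x, ({x : Euc d | r - δ ≤ dist x y ∧ dist x y < r}).indicator
                    (fun _ => G y) x := lintegral_congr hcongr
              _ = G y * volume {x : Euc d | r - δ ≤ dist x y ∧ dist x y < r} :=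
                  lintegral_indicator_const hSy _
              _ ≤ G y * Aof := mul_le_mul_right (hdual_vol y) _
        _ = Aof * ∫⁻ y, G y := by
            rw [lintegral_mul_const' Aof G hAt, mul_comm]
    -- combine
    have hvit : v⁻¹ ≠ ⊤ := ENNReal.inv_ne_top.2 hv0
    have hconst_ne : v⁻¹ ^ pr * Aof ^ (pr - 1) ≠ ⊤ :=
      ENNReal.mul_ne_top (ENNReal.rpow_ne_top_of_nonneg (by linarith) hvit)
        (ENNReal.rpow_ne_top_of_nonneg (by linarith) hAt)
    have hconstE : v⁻¹ ^ pr * Aof ^ (pr - 1) * Aof = E ^ pr := by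
      have h1 : Aof ^ (pr - 1) * Aof = Aof ^ pr := by
        nth_rewrite 2 [← ENNReal.rpow_one Aof]
        rw [← ENNReal.rpow_add _ _ hA0 hAt, sub_add_cancel]
      rw [mul_assoc, h1, ← ENNReal.mul_rpow_of_nonneg _ _ (by linarith : (0:ℝ) ≤ pr)]
      congr 1
      rw [hA]
      calc v⁻¹ * (E * v) = E * (v⁻¹ * v) := by ring
        _ = E := by rw [ENNReal.inv_mul_cancel hv0 hvt, mul_one]
    have main : ∫⁻ x, (‖Mkn d k n h x‖₊ : ℝ≥0∞) ^ pr ≤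
        E ^ pr * ∫⁻ y, (‖h y‖₊ : ℝ≥0∞) ^ pr := by
      have e2 : ∫⁻ y, G y = ∫⁻ y, (‖h y‖₊ : ℝ≥0∞) ^ pr :=
        lintegral_congr_ae (hg.mono fun y hy => by rw [hG]; simp only [← hy]; rfl)
      calc ∫⁻ x, (‖Mkn d k n h x‖₊ : ℝ≥0∞) ^ pr
          ≤ ∫⁻ x, (v⁻¹ ^ pr * Aof ^ (pr - 1)) * ∫⁻ y in Ikn d k n x, G y :=
            lintegral_mono stepA
        _ = (v⁻¹ ^ pr * Aof ^ (pr - 1)) * ∫⁻ x, ∫⁻ y in Ikn d k n x, G y :=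
            lintegral_const_mul' _ _ hconst_ne
        _ ≤ (v⁻¹ ^ pr * Aof ^ (pr - 1)) * (Aof * ∫⁻ y, G y) := mul_le_mul_right stepB _
        _ = E ^ pr * ∫⁻ y, G y := by rw [← mul_assoc, hconstE]
        _ = E ^ pr * ∫⁻ y, (‖h y‖₊ : ℝ≥0∞) ^ pr := by rw [e2]
    calc eLpNorm (Mkn d k n h) p volume
        = (∫⁻ x, (‖Mkn d k n h x‖₊ : ℝ≥0∞) ^ pr) ^ (1 / pr) :=
          eLpNorm_eq_lintegral_rpow_enorm_toReal hp0 hptop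
      _ ≤ (E ^ pr * ∫⁻ y, (‖h y‖₊ : ℝ≥0∞) ^ pr) ^ (1 / pr) :=
          ENNReal.rpow_le_rpow main (by positivity)
      _ = E * (∫⁻ y, (‖h y‖₊ : ℝ≥0∞) ^ pr) ^ (1 / pr) := by
          rw [ENNReal.mul_rpow_of_nonneg _ _ (by positivity : (0:ℝ) ≤ 1 / pr),
            ← ENNReal.rpow_mul, mul_one_div_cancel hpr0.ne', ENNReal.rpow_one]
      _ = E * eLpNorm h p volume := by
          rw [eLpNorm_eq_lintegral_rpow_enorm_toReal hp0 hptop]; rfl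

end Main
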